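/- For every integer m, the limit as ε → 0⁺ of the integral over [ε, 2π−ε] of (1 − e^{i m z})/(1 − cos z) dz equals 2π|m|. -/

import Mathlib

open Real intervalIntegral Filter

/-- The Fejér-type polynomial `Q n z = (1 - cos (n z)) / (1 - cos z)` defined
without division. -/
noncomputable def Qaux : ℕ → ℝ → ℝ
  | 0 => fun _ => 0
  | 1 => fun _ => 1
  | (n + 2) => fun z => 2 * Real.cos ((n + 1) * z) + 2 * Qaux (n + 1) z - Qaux n z

lemma Qaux_cont (n : ℕ) : Continuous (Qaux n) := by
  induction n using Nat.strong_induction_on with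
  | _ n ih =>
    match n with
    | 0 => exact continuous_const
    | 1 => exact continuous_const
    | (n + 2) =>
      have h1 := ih (n + 1) (by omega)
      have h0 := ih n (by omega)
      simp only [Qaux]
      fun_prop

lemma Qaux_id (n : ℕ) (z : ℝ) :
    (1 - Real.cos z) * Qaux n z = 1 - Real.cos (n * z) := by
  induction n using Nat.strong_induction_on with
  | _ n ih =>
    match n with
    | 0 => simp [Qaux]
    | 1 => simp [Qaux]
    | (n + 2) =>
      have ih1 := ih (n + 1) (by omega)
      have ih0 := ih n (by omega)
      have hcos : Real.cos (((n : ℝ) + 2) * z)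
          = 2 * Real.cos z * Real.cos (((n : ℝ) + 1) * z) - Real.cos ((n : ℝ) * z) := by
        have h1 := Real.cos_add (((n : ℝ) + 1) * z) z
        have h2 := Real.cos_sub (((n : ℝ) + 1) * z) z
        have e1 : ((n : ℝ) + 2) * z = ((n : ℝ) + 1) * z + z := by ring
        have e2 : (n : ℝ) * z = ((n : ℝ) + 1) * z - z := by ring
        rw [e1, e2, h1, h2]; ring
      simp only [Qaux]
      push_cast at *
      linear_combination 2 * ih1 - ih0 + hcos

lemma Qaux_intble (n : ℕ) (a b : ℝ) : IntervalIntegrable (Qaux n) MeasureTheory.volume a b :=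
  (Qaux_cont n).intervalIntegrable a b

lemma integral_cos_nat (k : ℕ) (hk : k ≠ 0) :
    ∫ z in (0:ℝ)..(2 * Real.pi), Real.cos ((k : ℝ) * z) = 0 := by
  have h := smul_integral_comp_mul_left Real.cos (a := 0)
    (b := 2 * Real.pi) (c := (k : ℝ))
  rw [integral_cos] at h
  have hs : Real.sin ((k : ℝ) * (2 * Real.pi)) = 0 := by
    have he : ((k : ℝ)) * (2 * Real.pi) = ((2 * k : ℤ) : ℝ) * Real.pi := by push_cast; ring
    rw [he, Real.sin_int_mul_pi]
  rw [mul_zero, hs, Real.sin_zero, sub_zero] at h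
  have hk' : (k : ℝ) ≠ 0 := Nat.cast_ne_zero.mpr hk
  rcases smul_eq_zero.mp h with h' | h'
  · exact absurd h' hk'
  · exact h'

lemma Qaux_integral (n : ℕ) :
    ∫ z in (0:ℝ)..(2 * Real.pi), Qaux n z = 2 * Real.pi * n := by
  induction n using Nat.strong_induction_on with
  | _ n ih =>
    match n with
    | 0 => simp [Qaux]
    | 1 => simp [Qaux, two_mul]
    | (n + 2) =>
      have ih1 := ih (n + 1) (by omega)
      have ih0 := ih n (by omega)
      have hc : IntervalIntegrable (fun z => 2 * Real.cos (((n : ℝ) + 1) * z))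
          MeasureTheory.volume 0 (2 * Real.pi) := by
        apply Continuous.intervalIntegrable; fun_prop
      have h2 : IntervalIntegrable (fun z => 2 * Qaux (n + 1) z)
          MeasureTheory.volume 0 (2 * Real.pi) :=
        (continuous_const.mul (Qaux_cont (n + 1))).intervalIntegrable _ _
      have hcosint : ∫ z in (0:ℝ)..(2 * Real.pi), Real.cos (((n : ℝ) + 1) * z) = 0 := by
        have := integral_cos_nat (n + 1) (by omega)
        push_cast at this ⊢
        exact this
      simp only [Qaux]
      rw [intervalIntegral.integral_sub (hc.add h2) (Qaux_intble n 0 (2 * Real.pi)),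
        intervalIntegral.integral_add hc h2,
        intervalIntegral.integral_const_mul, intervalIntegral.integral_const_mul,
        hcosint, ih1, ih0]
      push_cast
      ring

lemma natAbs_cast_real (m : ℤ) : ((m.natAbs : ℝ)) = |(m : ℝ)| := by
  simp [Nat.cast_natAbs]

/-- `lim_{ε→0⁺} ∫_ε^{2π-ε} (1 - e^{imz})/(1 - cos z) dz = 2π|m|` in `ℂ`. -/
theorem stmt_2 (m : ℤ) :
    Filter.Tendsto
      (fun ε : ℝ => ∫ z in ε..(2 * Real.pi - ε),
        ((1 : ℂ) - Complex.exp (Complex.I * (m : ℂ) * (z : ℂ)))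
          / (((1 - Real.cos z : ℝ) : ℂ)))
      (nhdsWithin 0 (Set.Ioi 0))
      (nhds ((2 * Real.pi * |(m : ℝ)| : ℝ) : ℂ)) := by
  set n : ℕ := m.natAbs with hn
  set f : ℝ → ℂ := fun z =>
    ((1 : ℂ) - Complex.exp (Complex.I * (m : ℂ) * (z : ℂ))) / (((1 - Real.cos z : ℝ) : ℂ))
    with hf
  -- the real integral tends to 2π n
  have hreal : Filter.Tendsto
      (fun ε : ℝ => ∫ z in ε..(2 * Real.pi - ε), Qaux n z)
      (nhdsWithin 0 (Set.Ioi 0)) (nhds (2 * Real.pi * n)) := by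
    have hcont : Continuous (fun t : ℝ => ∫ z in (0:ℝ)..t, Qaux n z) :=
      intervalIntegral.continuous_primitive (fun a b => Qaux_intble n a b) 0
    have hsplit : ∀ ε : ℝ, (∫ z in ε..(2 * Real.pi - ε), Qaux n z)
        = (∫ z in (0:ℝ)..(2 * Real.pi - ε), Qaux n z) - ∫ z in (0:ℝ)..ε, Qaux n z :=
      fun ε => (intervalIntegral.integral_interval_sub_left
        (Qaux_intble n 0 _) (Qaux_intble n 0 _)).symm
    have hc2 : Continuous (fun ε : ℝ =>
        (∫ z in (0:ℝ)..(2 * Real.pi - ε), Qaux n z) - ∫ z in (0:ℝ)..ε, Qaux n z) :=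
      (hcont.comp (continuous_const.sub continuous_id)).sub hcont
    have ht := hc2.tendsto 0
    simp only [sub_zero, intervalIntegral.integral_same] at ht
    rw [Qaux_integral n] at ht
    have : Filter.Tendsto (fun ε : ℝ =>
        (∫ z in (0:ℝ)..(2 * Real.pi - ε), Qaux n z) - ∫ z in (0:ℝ)..ε, Qaux n z)
        (nhdsWithin 0 (Set.Ioi 0)) (nhds (2 * Real.pi * n)) := by
      simpa using ht.mono_left nhdsWithin_le_nhds
    exact this.congr (fun ε => (hsplit ε).symm)
  -- key pointwise / integral identity for 0 < ε < π
  have hkey : ∀ ε ∈ Set.Ioo (0:ℝ) Real.pi,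
      (∫ z in ε..(2 * Real.pi - ε), f z)
        = ((∫ z in ε..(2 * Real.pi - ε), Qaux n z : ℝ) : ℂ) := by
    rintro ε ⟨hε0, hεπ⟩
    have hab : ε ≤ 2 * Real.pi - ε := by linarith
    have huIcc : Set.uIcc ε (2 * Real.pi - ε) = Set.Icc ε (2 * Real.pi - ε) :=
      Set.uIcc_of_le hab
    have hden : ∀ z ∈ Set.Icc ε (2 * Real.pi - ε), 0 < 1 - Real.cos z := by
      rintro z ⟨h1, h2⟩
      have hz0 : 0 < z := lt_of_lt_of_le hε0 h1
      have hz2 : z < 2 * Real.pi := by linarith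
      have hs : 0 < Real.sin (z / 2) :=
        Real.sin_pos_of_pos_of_lt_pi (by linarith) (by linarith)
      have hid := Real.cos_two_mul (z / 2)
      rw [show 2 * (z / 2) = z by ring] at hid
      nlinarith [Real.sin_sq_add_cos_sq (z / 2), hs]
    have hdenC : ∀ z ∈ Set.Icc ε (2 * Real.pi - ε),
        ((1 - Real.cos z : ℝ) : ℂ) ≠ 0 := fun z hz =>
      Complex.ofReal_ne_zero.mpr (ne_of_gt (hden z hz))
    -- continuity of f on the interval
    have hfc : ContinuousOn f (Set.uIcc ε (2 * Real.pi - ε)) := by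
      rw [huIcc]
      apply ContinuousOn.div
      · fun_prop
      · fun_prop
      · exact hdenC
    have hfi : IntervalIntegrable f MeasureTheory.volume ε (2 * Real.pi - ε) :=
      hfc.intervalIntegrable
    -- the reflected function
    have hrefl : (∫ z in ε..(2 * Real.pi - ε), f (2 * Real.pi - z))
        = ∫ z in ε..(2 * Real.pi - ε), f z := by
      rw [intervalIntegral.integral_comp_sub_left f (2 * Real.pi)]
      norm_num
    have hgc : ContinuousOn (fun z => f (2 * Real.pi - z))
        (Set.uIcc ε (2 * Real.pi - ε)) := by
      apply hfc.comp (by fun_prop)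
      intro z hz
      rw [huIcc] at hz ⊢
      exact ⟨by linarith [hz.2], by linarith [hz.1]⟩
    have hgi : IntervalIntegrable (fun z => f (2 * Real.pi - z))
        MeasureTheory.volume ε (2 * Real.pi - ε) := hgc.intervalIntegrable
    -- pointwise symmetrization identity
    have hsym : ∀ z ∈ Set.uIcc ε (2 * Real.pi - ε),
        f z + f (2 * Real.pi - z) = 2 * (Qaux n z : ℂ) := by
      intro z hz
      rw [huIcc] at hz
      have hD := hdenC z hz
      have hcos2π : Real.cos (2 * Real.pi - z) = Real.cos z := Real.cos_two_pi_sub z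
      have hexp2π : Complex.exp (Complex.I * (m : ℂ) * ((2 * Real.pi - z : ℝ) : ℂ))
          = Complex.exp (-(Complex.I * (m : ℂ) * (z : ℂ))) := by
        push_cast
        rw [show Complex.I * (m : ℂ) * (2 * (Real.pi : ℂ) - (z : ℂ))
            = (m : ℂ) * (2 * (Real.pi : ℂ) * Complex.I) + (-(Complex.I * (m : ℂ) * (z : ℂ)))
            by ring, Complex.exp_add, Complex.exp_int_mul_two_pi_mul_I, one_mul]
      have hexpsum : Complex.exp (Complex.I * (m : ℂ) * (z : ℂ))
          + Complex.exp (-(Complex.I * (m : ℂ) * (z : ℂ)))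
          = 2 * ((Real.cos ((m : ℝ) * z) : ℝ) : ℂ) := by
        rw [Complex.ofReal_cos]
        push_cast
        rw [show Complex.I * (m : ℂ) * (z : ℂ) = ((m : ℂ) * (z : ℂ)) * Complex.I by ring,
          show -(((m : ℂ) * (z : ℂ)) * Complex.I) = (-((m : ℂ) * (z : ℂ))) * Complex.I by ring,
          Complex.exp_mul_I, Complex.exp_mul_I, Complex.cos_neg, Complex.sin_neg]
        ring
      have hQ : (1 - Real.cos z) * Qaux n z = 1 - Real.cos ((m : ℝ) * z) := by
        rw [Qaux_id n z]
        congr 1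
        rw [hn, natAbs_cast_real]
        rcases abs_choice (m : ℝ) with h | h
        · rw [h]
        · rw [h, neg_mul, Real.cos_neg]
      have hQC : ((1 - Real.cos z : ℝ) : ℂ) * (Qaux n z : ℂ)
          = ((1 - Real.cos ((m : ℝ) * z) : ℝ) : ℂ) := by
        rw [← Complex.ofReal_mul, hQ]
      simp only [hf]
      rw [hcos2π, hexp2π]
      rw [← add_div, div_eq_iff hD]
      have : (1 : ℂ) - Complex.exp (Complex.I * (m : ℂ) * (z : ℂ))
          + ((1 : ℂ) - Complex.exp (-(Complex.I * (m : ℂ) * (z : ℂ))))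
          = 2 - (Complex.exp (Complex.I * (m : ℂ) * (z : ℂ))
            + Complex.exp (-(Complex.I * (m : ℂ) * (z : ℂ)))) := by ring
      rw [this, hexpsum]
      push_cast at hQC ⊢
      linear_combination (-2) * hQC
    calc (∫ z in ε..(2 * Real.pi - ε), f z)
        = (1 / 2) * ((∫ z in ε..(2 * Real.pi - ε), f z)
          + ∫ z in ε..(2 * Real.pi - ε), f (2 * Real.pi - z)) := by
          rw [hrefl]; ring
      _ = (1 / 2) * ∫ z in ε..(2 * Real.pi - ε), (f z + f (2 * Real.pi - z)) := by
          rw [intervalIntegral.integral_add hfi hgi]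
      _ = (1 / 2) * ∫ z in ε..(2 * Real.pi - ε), (2 * (Qaux n z : ℂ)) := by
          rw [intervalIntegral.integral_congr hsym]
      _ = ∫ z in ε..(2 * Real.pi - ε), ((Qaux n z : ℝ) : ℂ) := by
          rw [intervalIntegral.integral_const_mul]; ring
      _ = ((∫ z in ε..(2 * Real.pi - ε), Qaux n z : ℝ) : ℂ) := by
          rw [intervalIntegral.integral_ofReal]
  -- conclude
  have htarget : ((2 * Real.pi * |(m : ℝ)| : ℝ) : ℂ) = ((2 * Real.pi * n : ℝ) : ℂ) := by
    congr 1
    rw [hn, natAbs_cast_real]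
  rw [htarget]
  have hC : Filter.Tendsto (fun ε : ℝ => ((∫ z in ε..(2 * Real.pi - ε), Qaux n z : ℝ) : ℂ))
      (nhdsWithin 0 (Set.Ioi 0)) (nhds ((2 * Real.pi * n : ℝ) : ℂ)) := by
    exact (Complex.continuous_ofReal.tendsto _).comp hreal
  apply hC.congr'
  have hmem : Set.Ioo (0:ℝ) Real.pi ∈ nhdsWithin (0:ℝ) (Set.Ioi 0) := by
    rw [show Set.Ioo (0:ℝ) Real.pi = Set.Iio Real.pi ∩ Set.Ioi 0 by
      ext x; simp [Set.mem_Ioo, and_comm]]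
    exact Filter.inter_mem (nhdsWithin_le_nhds (Iio_mem_nhds Real.pi_pos))
      self_mem_nhdsWithin
  filter_upwards [hmem] with ε hε
  exact (hkey ε hε).symm
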